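/- Flattening of CTL: any CTL formula Φ is equivalent to a QCTL formula Ψ of the form ∃{κ_1,…,κ_m}.( Φ_0 ∧ ⋀_{i=1..m} AG( κ_i ↔ θ_i ) ), where κ_1,…,κ_m are fresh atomic propositions, Φ_0 is a Boolean combination of basic CTL formulas, and every θ_i is a basic CTL formula; moreover |Ψ| is in O(|Φ|). -/

import Mathlib

open Classical

/-- Syntax of QCTL: `φ ::= q | ¬φ | φ∨ψ | EX φ | E φ U ψ | A φ U ψ | ∃p.φ`. -/
inductive QCTL (AP : Type) : Type where
  | atom : AP → QCTL AP
  | qneg : QCTL AP → QCTL AP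
  | qor  : QCTL AP → QCTL AP → QCTL AP
  | qEX  : QCTL AP → QCTL AP
  | qEU  : QCTL AP → QCTL AP → QCTL AP
  | qAU  : QCTL AP → QCTL AP → QCTL AP
  | qexi : AP → QCTL AP → QCTL AP

/-- A Kripke structure over atomic propositions `AP` with (finite) state space `V`:
a serial edge relation and a labelling function. -/
structure Kripke (AP V : Type) where
  E : V → V → Prop
  serial : ∀ v, ∃ w, E v w
  label : V → Set AP

variable {AP V : Type}

/-- `K'` agrees with `K` (same edges) except possibly on the labelling of `p`. -/
def Kripke.AgreeExcept (K K' : Kripke AP V) (p : AP) : Prop :=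
  K'.E = K.E ∧ ∀ v q, q ≠ p → (q ∈ K'.label v ↔ q ∈ K.label v)

/-- Structure semantics of QCTL. -/
def QCTL.sat : QCTL AP → Kripke AP V → V → Prop
  | .atom p, K, x => p ∈ K.label x
  | .qneg φ, K, x => ¬ φ.sat K x
  | .qor φ ψ, K, x => φ.sat K x ∨ ψ.sat K x
  | .qEX φ, K, x => ∃ y, K.E x y ∧ φ.sat K y
  | .qEU φ ψ, K, x => ∃ ρ : ℕ → V, ρ 0 = x ∧ (∀ i, K.E (ρ i) (ρ (i + 1))) ∧
      ∃ i, ψ.sat K (ρ i) ∧ ∀ j < i, φ.sat K (ρ j)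
  | .qAU φ ψ, K, x => ∀ ρ : ℕ → V, ρ 0 = x → (∀ i, K.E (ρ i) (ρ (i + 1))) →
      ∃ i, ψ.sat K (ρ i) ∧ ∀ j < i, φ.sat K (ρ j)
  | .qexi p φ, K, x => ∃ K' : Kripke AP V, K.AgreeExcept K' p ∧ φ.sat K' x

namespace QCTL

def qand (φ ψ : QCTL AP) : QCTL AP := qneg (qor (qneg φ) (qneg ψ))
def qimp (φ ψ : QCTL AP) : QCTL AP := qor (qneg φ) ψ
def qiff (φ ψ : QCTL AP) : QCTL AP := qand (qimp φ ψ) (qimp ψ φ)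
def qtop [Inhabited AP] : QCTL AP := qor (atom default) (qneg (atom default))
def qbot [Inhabited AP] : QCTL AP := qneg qtop
def qAX (φ : QCTL AP) : QCTL AP := qneg (qEX (qneg φ))
def qEF [Inhabited AP] (φ : QCTL AP) : QCTL AP := qEU qtop φ
def qAG [Inhabited AP] (φ : QCTL AP) : QCTL AP := qneg (qEF (qneg φ))
def qall (p : AP) (φ : QCTL AP) : QCTL AP := qneg (qexi p (qneg φ))

/-- All atomic propositions occurring in a formula (free or bound). -/
def atoms : QCTL AP → Set AP
  | atom p => {p}
  | qneg φ => φ.atoms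
  | qor φ ψ => φ.atoms ∪ ψ.atoms
  | qEX φ => φ.atoms
  | qEU φ ψ => φ.atoms ∪ ψ.atoms
  | qAU φ ψ => φ.atoms ∪ ψ.atoms
  | qexi p φ => insert p φ.atoms

/-- Size of a formula. -/
def qsize : QCTL AP → ℕ
  | atom _ => 1
  | qneg φ => φ.qsize + 1
  | qor φ ψ => φ.qsize + ψ.qsize + 1
  | qEX φ => φ.qsize + 1
  | qEU φ ψ => φ.qsize + ψ.qsize + 1
  | qAU φ ψ => φ.qsize + ψ.qsize + 1
  | qexi _ φ => φ.qsize + 1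

end QCTL

/-- Equivalence of two QCTL formulas: same truth value at every state of every
(finite) Kripke structure. -/
def QEquiv (φ ψ : QCTL AP) : Prop :=
  ∀ (V : Type) [Fintype V] (K : Kripke AP V) (x : V), φ.sat K x ↔ ψ.sat K x

/-- `∃p₁.…∃pₙ.φ` for a list of atomic propositions. -/
def exiMany {AP : Type} (l : List AP) (φ : QCTL AP) : QCTL AP := l.foldr QCTL.qexi φ

/-- Conjunction of a list of formulas, with a final base conjunct. -/
def conjList {AP : Type} (l : List (QCTL AP)) (base : QCTL AP) : QCTL AP :=
  l.foldr QCTL.qand base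

/-- Disjunction of a list of formulas, with a final base disjunct. -/
def disjList {AP : Type} (l : List (QCTL AP)) (base : QCTL AP) : QCTL AP :=
  l.foldr QCTL.qor base
/-- Boolean combinations of atomic propositions. -/
inductive BoolAtoms {AP : Type} : QCTL AP → Prop where
  | atom (p : AP) : BoolAtoms (QCTL.atom p)
  | qneg {φ} : BoolAtoms φ → BoolAtoms (QCTL.qneg φ)
  | qor {φ ψ} : BoolAtoms φ → BoolAtoms ψ → BoolAtoms (QCTL.qor φ ψ)

/-- Basic CTL formulas: `EX α`, `E α U β` or `A α U β` with `α`, `β` Boolean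
combinations of atomic propositions. -/
inductive BasicCTL {AP : Type} : QCTL AP → Prop where
  | qEX {α} : BoolAtoms α → BasicCTL (QCTL.qEX α)
  | qEU {α β} : BoolAtoms α → BoolAtoms β → BasicCTL (QCTL.qEU α β)
  | qAU {α β} : BoolAtoms α → BoolAtoms β → BasicCTL (QCTL.qAU α β)

/-- Boolean combinations of basic CTL formulas (and of atomic propositions). -/
inductive BoolCombBasic {AP : Type} : QCTL AP → Prop where
  | basic {φ} : BasicCTL φ → BoolCombBasic φ
  | atom (p : AP) : BoolCombBasic (QCTL.atom p)
  | qneg {φ} : BoolCombBasic φ → BoolCombBasic (QCTL.qneg φ)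
  | qor {φ ψ} : BoolCombBasic φ → BoolCombBasic ψ → BoolCombBasic (QCTL.qor φ ψ)

/-- Quantifier-free QCTL formulas, i.e. CTL formulas. -/
def QCTL.quantFree {AP : Type} : QCTL AP → Prop
  | .atom _ => True
  | .qneg φ => φ.quantFree
  | .qor φ ψ => φ.quantFree ∧ ψ.quantFree
  | .qEX φ => φ.quantFree
  | .qEU φ ψ => φ.quantFree ∧ ψ.quantFree
  | .qAU φ ψ => φ.quantFree ∧ ψ.quantFree
  | .qexi _ _ => False

/-- The body `Φ₀ ∧ ⋀_{i=1..m} AG( κᵢ ↔ θᵢ )` of a flat formula. -/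
def flatBody {AP : Type} [Inhabited AP] (m : ℕ) (κ : Fin m → AP)
    (Φ0 : QCTL AP) (θ : Fin m → QCTL AP) : QCTL AP :=
  conjList
    ((List.finRange m).map fun i => QCTL.qAG (QCTL.qiff (QCTL.atom (κ i)) (θ i)))
    Φ0
section Helpers

open QCTL

variable {AP V : Type}

lemma Kripke.ext' {K K' : Kripke AP V} (hE : K'.E = K.E)
    (hl : ∀ v q, q ∈ K'.label v ↔ q ∈ K.label v) : K' = K := by
  cases K; cases K'
  simp only [Kripke.mk.injEq] at *
  refine ⟨hE, funext fun v => Set.ext fun q => hl v q⟩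

lemma sat_qand (φ ψ : QCTL AP) (K : Kripke AP V) (x : V) :
    (QCTL.qand φ ψ).sat K x ↔ φ.sat K x ∧ ψ.sat K x := by
  simp [QCTL.qand, QCTL.sat]

lemma sat_qiff (φ ψ : QCTL AP) (K : Kripke AP V) (x : V) :
    (QCTL.qiff φ ψ).sat K x ↔ (φ.sat K x ↔ ψ.sat K x) := by
  simp [QCTL.qiff, QCTL.qimp, sat_qand, QCTL.sat]; tauto

lemma sat_qtop [Inhabited AP] (K : Kripke AP V) (x : V) :
    (QCTL.qtop (AP := AP)).sat K x := by
  simp [QCTL.qtop, QCTL.sat]; tauto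

noncomputable def Kripke.next (K : Kripke AP V) (v : V) : V := Classical.choose (K.serial v)

lemma Kripke.next_spec (K : Kripke AP V) (v : V) : K.E v (K.next v) :=
  Classical.choose_spec (K.serial v)

lemma path_mem (K : Kripke AP V) {S : Set V} (hS : ∀ ⦃y z⦄, y ∈ S → K.E y z → z ∈ S)
    {ρ : ℕ → V} (h0 : ρ 0 ∈ S) (hE : ∀ i, K.E (ρ i) (ρ (i + 1))) : ∀ i, ρ i ∈ S := by
  intro i
  induction i with
  | zero => exact h0
  | succ n ih => exact hS ih (hE n)

lemma reach_iff_path (K : Kripke AP V) (x y : V) :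
    Relation.ReflTransGen K.E x y ↔
      ∃ ρ : ℕ → V, ρ 0 = x ∧ (∀ i, K.E (ρ i) (ρ (i + 1))) ∧ ∃ i, ρ i = y := by
  constructor
  · intro h
    induction h using Relation.ReflTransGen.head_induction_on with
    | refl =>
      refine ⟨fun i => K.next^[i] y, rfl, fun i => ?_, 0, rfl⟩
      show K.E (K.next^[i] y) (K.next^[i+1] y)
      rw [Function.iterate_succ_apply']
      exact K.next_spec _
    | @head a c hab _ ih =>
      obtain ⟨ρ, h0, hE, i, hi⟩ := ih
      refine ⟨fun n => Nat.rec a (fun k _ => ρ k) n, rfl, fun n => ?_, i + 1, hi⟩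
      cases n with
      | zero => show K.E a (ρ 0); rw [h0]; exact hab
      | succ k => exact hE k
  · rintro ⟨ρ, h0, hE, i, rfl⟩
    subst h0
    induction i with
    | zero => exact Relation.ReflTransGen.refl
    | succ k ih => exact ih.tail (hE k)

end Helpers
section Helpers2

open QCTL

variable {AP V : Type}

lemma sat_qAG [Inhabited AP] (ψ : QCTL AP) (K : Kripke AP V) (x : V) :
    (QCTL.qAG ψ).sat K x ↔ ∀ y, Relation.ReflTransGen K.E x y → ψ.sat K y := by
  simp only [QCTL.qAG, QCTL.qEF, QCTL.sat]
  constructor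
  · intro h y hy
    rw [reach_iff_path] at hy
    obtain ⟨ρ, h0, hE, i, rfl⟩ := hy
    by_contra hns
    exact h ⟨ρ, h0, hE, i, hns, fun j _ => sat_qtop K _⟩
  · rintro h ⟨ρ, h0, hE, i, hns, -⟩
    exact hns (h _ ((reach_iff_path K x (ρ i)).2 ⟨ρ, h0, hE, i, rfl⟩))

lemma sat_conjList (L : List (QCTL AP)) (b : QCTL AP) (K : Kripke AP V) (x : V) :
    (conjList L b).sat K x ↔ (∀ ψ ∈ L, ψ.sat K x) ∧ b.sat K x := by
  induction L with
  | nil => simp [conjList]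
  | cons h t ih =>
    simp only [conjList, List.foldr] at *
    rw [sat_qand, ih]
    simp; tauto

/-- Agreement except on a set of atoms. -/
def AgreeSet (K K' : Kripke AP V) (s : Set AP) : Prop :=
  K'.E = K.E ∧ ∀ v q, q ∉ s → (q ∈ K'.label v ↔ q ∈ K.label v)

lemma sat_exiMany (l : List AP) (φ : QCTL AP) (K : Kripke AP V) (x : V) :
    (exiMany l φ).sat K x ↔ ∃ K', AgreeSet K K' {a | a ∈ l} ∧ φ.sat K' x := by
  induction l generalizing K with
  | nil =>
    simp only [exiMany, List.foldr]
    constructor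
    · intro h; exact ⟨K, ⟨rfl, fun _ _ _ => Iff.rfl⟩, h⟩
    · rintro ⟨K', ⟨hE, hl⟩, h⟩
      rwa [Kripke.ext' hE (fun v q => hl v q (by simp))] at h
  | cons p t ih =>
    simp only [exiMany, List.foldr] at *
    show (∃ K1, K.AgreeExcept K1 p ∧ _) ↔ _
    constructor
    · rintro ⟨K1, ⟨hE1, hl1⟩, h1⟩
      rw [ih] at h1
      obtain ⟨K2, ⟨hE2, hl2⟩, h2⟩ := h1
      refine ⟨K2, ⟨hE2.trans hE1, fun v q hq => ?_⟩, h2⟩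
      simp only [List.mem_cons, Set.mem_setOf_eq] at hq
      push_neg at hq
      exact (hl2 v q (by simpa using hq.2)).trans (hl1 v q hq.1)
    · rintro ⟨K2, ⟨hE2, hl2⟩, h2⟩
      refine ⟨⟨K.E, K.serial, fun v => {q | if q = p then q ∈ K2.label v else q ∈ K.label v}⟩,
        ⟨rfl, fun v q hq => by simp [Set.mem_setOf_eq, if_neg hq]⟩, ?_⟩
      rw [ih]
      refine ⟨K2, ⟨hE2, fun v q hq => ?_⟩, h2⟩
      simp only [Set.mem_setOf_eq] at hq ⊢
      by_cases hqp : q = p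
      · simp [hqp]
      · rw [if_neg hqp]
        exact hl2 v q (by simp [hqp, hq])

lemma qsize_conjList (L : List (QCTL AP)) (b : QCTL AP) :
    (conjList L b).qsize = (L.map QCTL.qsize).sum + 4 * L.length + b.qsize := by
  induction L with
  | nil => simp [conjList]
  | cons h t ih =>
    show (QCTL.qand h (conjList t b)).qsize = _
    simp only [QCTL.qand, QCTL.qsize, ih, List.map_cons, List.sum_cons, List.length_cons]
    ring

lemma qsize_exiMany (l : List AP) (φ : QCTL AP) :
    (exiMany l φ).qsize = l.length + φ.qsize := by
  induction l with
  | nil => simp [exiMany]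
  | cons p t ih =>
    show (QCTL.qexi p (exiMany t φ)).qsize = _
    simp [QCTL.qsize, ih]; ring

lemma qsize_conj_piece [Inhabited AP] (a : AP) (θ : QCTL AP) :
    (QCTL.qAG (QCTL.qiff (QCTL.atom a) θ)).qsize = 2 * θ.qsize + 17 := by
  simp [QCTL.qAG, QCTL.qEF, QCTL.qiff, QCTL.qand, QCTL.qimp, QCTL.qtop, QCTL.qsize]
  ring

lemma atoms_finite (φ : QCTL AP) : φ.atoms.Finite := by
  induction φ with
  | atom p => exact Set.finite_singleton p
  | qneg φ ih => exact ih
  | qor φ ψ ih1 ih2 => exact ih1.union ih2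
  | qEX φ ih => exact ih
  | qEU φ ψ ih1 ih2 => exact ih1.union ih2
  | qAU φ ψ ih1 ih2 => exact ih1.union ih2
  | qexi p φ ih => exact ih.insert p

lemma boolAtoms_boolCombBasic {φ : QCTL AP} (h : BoolAtoms φ) : BoolCombBasic φ := by
  induction h with
  | atom p => exact BoolCombBasic.atom p
  | qneg _ ih => exact BoolCombBasic.qneg ih
  | qor _ _ ih1 ih2 => exact BoolCombBasic.qor ih1 ih2

end Helpers2
section Trans

open QCTL

variable {AP V : Type}

/-- Flattening translation: returns a Boolean (over atoms) formula and a list of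
(basic-translated, original) temporal subformulas; entry `j` of the list, when the
translation is started at index `n`, corresponds to fresh atom `f (n+j)`. -/
def trf (f : ℕ → AP) : QCTL AP → ℕ → QCTL AP × List (QCTL AP × QCTL AP)
  | .atom p, _ => (.atom p, [])
  | .qneg φ, n => ((trf f φ n).1.qneg, (trf f φ n).2)
  | .qor φ ψ, n =>
      ((trf f φ n).1.qor (trf f ψ (n + (trf f φ n).2.length)).1,
        (trf f φ n).2 ++ (trf f ψ (n + (trf f φ n).2.length)).2)
  | .qEX φ, n =>
      (.atom (f (n + (trf f φ n).2.length)),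
        (trf f φ n).2 ++ [((trf f φ n).1.qEX, φ.qEX)])
  | .qEU φ ψ, n =>
      (.atom (f (n + (trf f φ n).2.length + (trf f ψ (n + (trf f φ n).2.length)).2.length)),
        (trf f φ n).2 ++ (trf f ψ (n + (trf f φ n).2.length)).2 ++
          [((trf f φ n).1.qEU (trf f ψ (n + (trf f φ n).2.length)).1, φ.qEU ψ)])
  | .qAU φ ψ, n =>
      (.atom (f (n + (trf f φ n).2.length + (trf f ψ (n + (trf f φ n).2.length)).2.length)),
        (trf f φ n).2 ++ (trf f ψ (n + (trf f φ n).2.length)).2 ++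
          [((trf f φ n).1.qAU (trf f ψ (n + (trf f φ n).2.length)).1, φ.qAU ψ)])
  | .qexi p _, _ => (.atom p, [])

lemma trf_fst_bool (f : ℕ → AP) (φ : QCTL AP) (n : ℕ) : BoolAtoms (trf f φ n).1 := by
  induction φ generalizing n with
  | atom p => exact BoolAtoms.atom p
  | qneg φ ih => exact BoolAtoms.qneg (ih n)
  | qor φ ψ ih1 ih2 => exact BoolAtoms.qor (ih1 n) (ih2 _)
  | qEX φ ih => exact BoolAtoms.atom _
  | qEU φ ψ ih1 ih2 => exact BoolAtoms.atom _
  | qAU φ ψ ih1 ih2 => exact BoolAtoms.atom _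
  | qexi p φ ih => exact BoolAtoms.atom _

lemma trf_snd_basic (f : ℕ → AP) (φ : QCTL AP) (n : ℕ) :
    ∀ e ∈ (trf f φ n).2, BasicCTL e.1 := by
  induction φ generalizing n with
  | atom p => simp [trf]
  | qneg φ ih => exact ih n
  | qor φ ψ ih1 ih2 =>
    intro e he
    simp only [trf, List.mem_append] at he
    rcases he with h | h
    · exact ih1 n e h
    · exact ih2 _ e h
  | qEX φ ih =>
    intro e he
    simp only [trf, List.mem_append, List.mem_singleton] at he
    rcases he with h | rfl
    · exact ih n e h
    · exact BasicCTL.qEX (trf_fst_bool f φ n)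
  | qEU φ ψ ih1 ih2 =>
    intro e he
    simp only [trf, List.mem_append, List.mem_singleton] at he
    rcases he with (h | h) | rfl
    · exact ih1 n e h
    · exact ih2 _ e h
    · exact BasicCTL.qEU (trf_fst_bool f φ n) (trf_fst_bool f ψ _)
  | qAU φ ψ ih1 ih2 =>
    intro e he
    simp only [trf, List.mem_append, List.mem_singleton] at he
    rcases he with (h | h) | rfl
    · exact ih1 n e h
    · exact ih2 _ e h
    · exact BasicCTL.qAU (trf_fst_bool f φ n) (trf_fst_bool f ψ _)
  | qexi p φ ih => simp [trf]

lemma trf_len_le (f : ℕ → AP) (φ : QCTL AP) (n : ℕ) :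
    (trf f φ n).2.length ≤ φ.qsize := by
  induction φ generalizing n with
  | atom p => simp [trf, QCTL.qsize]
  | qneg φ ih => simpa [trf, QCTL.qsize] using (ih n).trans (Nat.le_succ _)
  | qor φ ψ ih1 ih2 =>
    simp only [trf, List.length_append, QCTL.qsize]
    have := ih1 n; have := ih2 (n + (trf f φ n).2.length); omega
  | qEX φ ih =>
    simp only [trf, List.length_append, List.length_singleton, QCTL.qsize]
    have := ih n; omega
  | qEU φ ψ ih1 ih2 =>
    simp only [trf, List.length_append, List.length_singleton, QCTL.qsize]
    have := ih1 n; have := ih2 (n + (trf f φ n).2.length); omega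
  | qAU φ ψ ih1 ih2 =>
    simp only [trf, List.length_append, List.length_singleton, QCTL.qsize]
    have := ih1 n; have := ih2 (n + (trf f φ n).2.length); omega
  | qexi p φ ih => simp [trf, QCTL.qsize]

lemma trf_size (f : ℕ → AP) (φ : QCTL AP) (n : ℕ) :
    ((trf f φ n).2.map (fun e => e.1.qsize)).sum + (trf f φ n).1.qsize ≤ 2 * φ.qsize := by
  induction φ generalizing n with
  | atom p => simp [trf, QCTL.qsize]
  | qneg φ ih =>
    simp only [trf, QCTL.qsize]
    have := ih n; omega
  | qor φ ψ ih1 ih2 =>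
    simp only [trf, QCTL.qsize, List.map_append, List.sum_append]
    have := ih1 n; have := ih2 (n + (trf f φ n).2.length); omega
  | qEX φ ih =>
    simp only [trf, QCTL.qsize, List.map_append, List.sum_append, List.map_cons,
      List.map_nil, List.sum_cons, List.sum_nil]
    have := ih n; omega
  | qEU φ ψ ih1 ih2 =>
    simp only [trf, QCTL.qsize, List.map_append, List.sum_append, List.map_cons,
      List.map_nil, List.sum_cons, List.sum_nil]
    have := ih1 n; have := ih2 (n + (trf f φ n).2.length); omega
  | qAU φ ψ ih1 ih2 =>
    simp only [trf, QCTL.qsize, List.map_append, List.sum_append, List.map_cons,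
      List.map_nil, List.sum_cons, List.sum_nil]
    have := ih1 n; have := ih2 (n + (trf f φ n).2.length); omega
  | qexi p φ ih => simp [trf, QCTL.qsize]; omega

end Trans
section Main

open QCTL

variable {AP V : Type}

/-- The hypothesis that fresh atom `f (n+j)` labels exactly the states of `S` where
the `j`-th original temporal subformula holds (in `K`), for all `j < k`. -/
def Hwin (f : ℕ → AP) (K K' : Kripke AP V) (S : Set V) (n : ℕ)
    (L : List (QCTL AP × QCTL AP)) (k : ℕ) : Prop :=
  ∀ y ∈ S, ∀ j, ∀ hj : j < L.length, j < k →
    (f (n + j) ∈ K'.label y ↔ (L[j]'hj).2.sat K y)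

lemma Hwin_mono {f : ℕ → AP} {K K' : Kripke AP V} {S n L k k'}
    (h : Hwin f K K' S n L k) (hk : k' ≤ k) : Hwin f K K' S n L k' :=
  fun y hy j hj hjk => h y hy j hj (lt_of_lt_of_le hjk hk)

lemma Hwin_left {f : ℕ → AP} {K K' : Kripke AP V} {S n L1 L2 k}
    (h : Hwin f K K' S n (L1 ++ L2) k) : Hwin f K K' S n L1 k := by
  intro y hy j hj hjk
  have hj' : j < (L1 ++ L2).length := by simp; omega
  have := h y hy j hj' hjk
  rwa [List.getElem_append_left hj] at this

lemma Hwin_right {f : ℕ → AP} {K K' : Kripke AP V} {S n L1 L2 k}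
    (h : Hwin f K K' S n (L1 ++ L2) k) :
    Hwin f K K' S (n + L1.length) L2 (k - L1.length) := by
  intro y hy j hj hjk
  have hj' : L1.length + j < (L1 ++ L2).length := by simp; omega
  have := h y hy (L1.length + j) hj' (by omega)
  rw [List.getElem_append_right (by omega)] at this
  simpa [Nat.add_assoc, Nat.add_sub_cancel_left] using this

lemma main_tr (f : ℕ → AP) (K K' : Kripke AP V) (hE : K'.E = K.E)
    (S : Set V) (hS : ∀ ⦃y z⦄, y ∈ S → K.E y z → z ∈ S) :
    ∀ φ : QCTL AP, φ.quantFree →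
      (∀ y q, q ∈ φ.atoms → (q ∈ K'.label y ↔ q ∈ K.label y)) →
      ∀ n : ℕ,
      (Hwin f K K' S n (trf f φ n).2 (trf f φ n).2.length →
        ∀ y ∈ S, ((trf f φ n).1.sat K' y ↔ φ.sat K y))
      ∧ (∀ j, ∀ hj : j < (trf f φ n).2.length,
          Hwin f K K' S n (trf f φ n).2 j →
          ∀ y ∈ S, ((((trf f φ n).2[j]'hj).1.sat K' y ↔ (((trf f φ n).2[j]'hj)).2.sat K y))) := by
  intro φ
  induction φ with
  | atom p =>
    intro _ hagree n
    constructor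
    · intro _ y hy
      exact hagree y p (by simp [QCTL.atoms])
    · intro j hj
      simp [trf] at hj
  | qneg φ ih =>
    intro hqf hagree n
    obtain ⟨C1, C2⟩ := ih hqf hagree n
    constructor
    · intro hw y hy
      show ¬ _ ↔ ¬ _
      exact not_congr (C1 hw y hy)
    · exact C2
  | qor φ ψ ih1 ih2 =>
    intro hqf hagree n
    obtain ⟨C11, C12⟩ := ih1 hqf.1 (fun y q hq => hagree y q (Or.inl hq)) n
    obtain ⟨C21, C22⟩ := ih2 hqf.2 (fun y q hq => hagree y q (Or.inr hq)) (n + (trf f φ n).2.length)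
    constructor
    · intro hw y hy
      show _ ∨ _ ↔ _ ∨ _
      have hw' : Hwin f K K' S n ((trf f φ n).2 ++ (trf f ψ (n + (trf f φ n).2.length)).2)
          ((trf f φ n).2 ++ (trf f ψ (n + (trf f φ n).2.length)).2).length := hw
      refine or_congr (C11 (Hwin_mono (Hwin_left hw') ?_) y hy)
        (C21 (by simpa using Hwin_right hw') y hy)
      simp
    · intro j hj hw y hy
      have hj' := hj
      simp only [trf, List.length_append] at hj'
      by_cases hcase : j < (trf f φ n).2.length
      · have : ((trf f (φ.qor ψ) n).2[j]'hj) = ((trf f φ n).2[j]'hcase) := by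
          simp only [trf]
          exact List.getElem_append_left hcase
        rw [this]
        exact C12 j hcase (Hwin_left hw) y hy
      · push_neg at hcase
        have hj2 : j - (trf f φ n).2.length < (trf f ψ (n + (trf f φ n).2.length)).2.length := by omega
        have : ((trf f (φ.qor ψ) n).2[j]'hj)
            = ((trf f ψ (n + (trf f φ n).2.length)).2[j - (trf f φ n).2.length]'hj2) := by
          simp only [trf]
          exact List.getElem_append_right hcase
        rw [this]
        exact C22 _ hj2 (Hwin_right hw) y hy
  | qEX φ ih =>
    intro hqf hagree n
    obtain ⟨C1, C2⟩ := ih hqf hagree n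
    have hlen : (trf f (φ.qEX) n).2.length = (trf f φ n).2.length + 1 := by simp [trf]
    have hget : ∀ hj, ((trf f (φ.qEX) n).2[(trf f φ n).2.length]'hj) = ((trf f φ n).1.qEX, φ.qEX) := by
      intro hj
      simp only [trf]
      rw [List.getElem_append_right (le_refl _)]
      simp
    constructor
    · intro hw y hy
      show f (n + (trf f φ n).2.length) ∈ K'.label y ↔ _
      have := hw y hy (trf f φ n).2.length (by omega) (by omega)
      rw [hget] at this
      exact this
    · intro j hj hw y hy
      by_cases hcase : j < (trf f φ n).2.length
      · have : ((trf f (φ.qEX) n).2[j]'hj) = ((trf f φ n).2[j]'hcase) := by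
          simp only [trf]
          exact List.getElem_append_left hcase
        rw [this]
        exact C2 j hcase (Hwin_left (by simpa only [trf] using hw)) y hy
      · have hjeq : j = (trf f φ n).2.length := by rw [hlen] at hj; omega
        subst hjeq
        rw [hget hj]
        have hsub : ∀ z ∈ S, ((trf f φ n).1.sat K' z ↔ φ.sat K z) :=
          C1 (Hwin_left (by simpa only [trf] using hw)) 
        show (∃ z, K'.E y z ∧ _) ↔ (∃ z, K.E y z ∧ _)
        rw [hE]
        exact exists_congr fun z => and_congr_right fun hz => hsub z (hS hy hz)
  | qEU φ ψ ih1 ih2 =>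
    intro hqf hagree n
    obtain ⟨C11, C12⟩ := ih1 hqf.1 (fun y q hq => hagree y q (Or.inl hq)) n
    obtain ⟨C21, C22⟩ := ih2 hqf.2 (fun y q hq => hagree y q (Or.inr hq)) (n + (trf f φ n).2.length)
    set L1 := (trf f φ n).2 with hL1
    set L2 := (trf f ψ (n + L1.length)).2 with hL2
    have hlen : (trf f (φ.qEU ψ) n).2.length = L1.length + L2.length + 1 := by
      simp [trf, ← hL1, ← hL2]; omega
    have hget : ∀ hj, ((trf f (φ.qEU ψ) n).2[L1.length + L2.length]'hj)
        = ((trf f φ n).1.qEU (trf f ψ (n + L1.length)).1, φ.qEU ψ) := by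
      intro hj
      show ((L1 ++ L2 ++ _)[L1.length + L2.length]'_) = _
      simp [List.getElem_append]
      rfl
    have hL : (trf f (φ.qEU ψ) n).2 = (L1 ++ L2) ++ [((trf f φ n).1.qEU (trf f ψ (n + L1.length)).1, φ.qEU ψ)] := by
      simp only [trf, ← hL1, ← hL2]
    have key : ∀ k, L1.length + L2.length ≤ k →
        Hwin f K K' S n (trf f (φ.qEU ψ) n).2 k →
        ∀ y ∈ S, (((trf f φ n).1.qEU (trf f ψ (n + L1.length)).1).sat K' y ↔ (φ.qEU ψ).sat K y) := by
      intro k hk hw y hy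
      rw [hL] at hw
      have hw1 : Hwin f K K' S n L1 L1.length :=
        Hwin_mono (Hwin_left (Hwin_left hw)) (by omega)
      have hw2 : Hwin f K K' S (n + L1.length) L2 L2.length := by
        have := Hwin_right (Hwin_left hw)
        exact Hwin_mono this (by omega)
      have hs1 := C11 hw1
      have hs2 := C21 hw2
      show (∃ ρ : ℕ → V, ρ 0 = y ∧ (∀ i, K'.E (ρ i) (ρ (i+1))) ∧ _) ↔ _
      rw [hE]
      apply exists_congr
      intro ρ
      apply and_congr_right
      intro h0
      apply and_congr_right
      intro hpath
      have hmem : ∀ i, ρ i ∈ S := path_mem K hS (h0 ▸ hy) hpath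
      exact exists_congr fun i => and_congr (hs2 _ (hmem i))
        (forall_congr' fun j => forall_congr' fun _ => hs1 _ (hmem j))
    constructor
    · intro hw y hy
      show f (n + L1.length + L2.length) ∈ K'.label y ↔ _
      have := hw y hy (L1.length + L2.length) (by omega) (by omega)
      rw [hget] at this
      rw [← Nat.add_assoc] at this
      exact this
    · intro j hj hw y hy
      by_cases hc1 : j < L1.length
      · have : ((trf f (φ.qEU ψ) n).2[j]'hj) = (L1[j]'hc1) := by
          refine (List.getElem_of_eq hL hj).trans ?_
          rw [List.getElem_append_left (show j < (L1 ++ L2).length by simp; omega)]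
          exact List.getElem_append_left hc1
        rw [this]
        refine C12 j hc1 ?_ y hy
        rw [hL] at hw
        exact Hwin_left (Hwin_left hw)
      · by_cases hc2 : j < L1.length + L2.length
        · push_neg at hc1
          have hj2 : j - L1.length < L2.length := by omega
          have : ((trf f (φ.qEU ψ) n).2[j]'hj) = (L2[j - L1.length]'hj2) := by
            refine (List.getElem_of_eq hL hj).trans ?_
            rw [List.getElem_append_left (show j < (L1 ++ L2).length by simp; omega)]
            exact List.getElem_append_right hc1
          rw [this]
          refine C22 _ hj2 ?_ y hy
          rw [hL] at hw
          exact Hwin_right (Hwin_left hw)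
        · have hjeq : j = L1.length + L2.length := by rw [hlen] at hj; omega
          subst hjeq
          rw [hget hj]
          exact key _ (le_refl _) hw y hy
  | qAU φ ψ ih1 ih2 =>
    intro hqf hagree n
    obtain ⟨C11, C12⟩ := ih1 hqf.1 (fun y q hq => hagree y q (Or.inl hq)) n
    obtain ⟨C21, C22⟩ := ih2 hqf.2 (fun y q hq => hagree y q (Or.inr hq)) (n + (trf f φ n).2.length)
    set L1 := (trf f φ n).2 with hL1
    set L2 := (trf f ψ (n + L1.length)).2 with hL2
    have hlen : (trf f (φ.qAU ψ) n).2.length = L1.length + L2.length + 1 := by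
      simp [trf, ← hL1, ← hL2]; omega
    have hget : ∀ hj, ((trf f (φ.qAU ψ) n).2[L1.length + L2.length]'hj)
        = ((trf f φ n).1.qAU (trf f ψ (n + L1.length)).1, φ.qAU ψ) := by
      intro hj
      show ((L1 ++ L2 ++ _)[L1.length + L2.length]'_) = _
      simp [List.getElem_append]
      rfl
    have hL : (trf f (φ.qAU ψ) n).2 = (L1 ++ L2) ++ [((trf f φ n).1.qAU (trf f ψ (n + L1.length)).1, φ.qAU ψ)] := by
      simp only [trf, ← hL1, ← hL2]
    have key : ∀ k, L1.length + L2.length ≤ k →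
        Hwin f K K' S n (trf f (φ.qAU ψ) n).2 k →
        ∀ y ∈ S, (((trf f φ n).1.qAU (trf f ψ (n + L1.length)).1).sat K' y ↔ (φ.qAU ψ).sat K y) := by
      intro k hk hw y hy
      rw [hL] at hw
      have hw1 : Hwin f K K' S n L1 L1.length :=
        Hwin_mono (Hwin_left (Hwin_left hw)) (by omega)
      have hw2 : Hwin f K K' S (n + L1.length) L2 L2.length := by
        have := Hwin_right (Hwin_left hw)
        exact Hwin_mono this (by omega)
      have hs1 := C11 hw1
      have hs2 := C21 hw2
      show (∀ ρ : ℕ → V, ρ 0 = y → (∀ i, K'.E (ρ i) (ρ (i+1))) → _) ↔ _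
      rw [hE]
      apply forall_congr'
      intro ρ
      apply imp_congr_right
      intro h0
      apply imp_congr_right
      intro hpath
      have hmem : ∀ i, ρ i ∈ S := path_mem K hS (h0 ▸ hy) hpath
      exact exists_congr fun i => and_congr (hs2 _ (hmem i))
        (forall_congr' fun j => forall_congr' fun _ => hs1 _ (hmem j))
    constructor
    · intro hw y hy
      show f (n + L1.length + L2.length) ∈ K'.label y ↔ _
      have := hw y hy (L1.length + L2.length) (by omega) (by omega)
      rw [hget] at this
      rw [← Nat.add_assoc] at this
      exact this
    · intro j hj hw y hy
      by_cases hc1 : j < L1.length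
      · have : ((trf f (φ.qAU ψ) n).2[j]'hj) = (L1[j]'hc1) := by
          refine (List.getElem_of_eq hL hj).trans ?_
          rw [List.getElem_append_left (show j < (L1 ++ L2).length by simp; omega)]
          exact List.getElem_append_left hc1
        rw [this]
        refine C12 j hc1 ?_ y hy
        rw [hL] at hw
        exact Hwin_left (Hwin_left hw)
      · by_cases hc2 : j < L1.length + L2.length
        · push_neg at hc1
          have hj2 : j - L1.length < L2.length := by omega
          have : ((trf f (φ.qAU ψ) n).2[j]'hj) = (L2[j - L1.length]'hj2) := by
            refine (List.getElem_of_eq hL hj).trans ?_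
            rw [List.getElem_append_left (show j < (L1 ++ L2).length by simp; omega)]
            exact List.getElem_append_right hc1
          rw [this]
          refine C22 _ hj2 ?_ y hy
          rw [hL] at hw
          exact Hwin_right (Hwin_left hw)
        · have hjeq : j = L1.length + L2.length := by rw [hlen] at hj; omega
          subst hjeq
          rw [hget hj]
          exact key _ (le_refl _) hw y hy
  | qexi p φ ih =>
    intro hqf
    exact absurd hqf (by simp [QCTL.quantFree])

end Main
section Assembly

open QCTL

lemma sum_affine {α : Type} (L : List α) (g : α → ℕ) (c : ℕ) :
    (L.map (fun a => 2 * g a + c)).sum = 2 * (L.map g).sum + c * L.length := by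
  induction L with
  | nil => simp
  | cons h t ih => simp [ih]; ring

lemma sum_finRange_getElem {α : Type} (L : List α) (g : α → ℕ) :
    ((List.finRange L.length).map (fun i : Fin L.length => g (L[(i : ℕ)]'i.isLt))).sum
      = (L.map g).sum := by
  have : (fun i : Fin L.length => g (L[(i : ℕ)]'i.isLt)) = g ∘ L.get := by
    funext i; simp [List.get_eq_getElem]
  rw [this, ← List.map_map, List.map_get_finRange]

theorem flatten_ctl' {AP : Type} [Inhabited AP] [Infinite AP] :
    ∃ C : ℕ, ∀ Φ : QCTL AP, Φ.quantFree →
      ∃ (m : ℕ) (κ : Fin m → AP) (Φ0 : QCTL AP) (θ : Fin m → QCTL AP),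
        Function.Injective κ ∧ (∀ i, κ i ∉ Φ.atoms) ∧
        BoolCombBasic Φ0 ∧ (∀ i, BasicCTL (θ i)) ∧
        QEquiv Φ (exiMany ((List.finRange m).map κ) (flatBody m κ Φ0 θ)) ∧
        (exiMany ((List.finRange m).map κ) (flatBody m κ Φ0 θ)).qsize ≤ C * Φ.qsize := by
  refine ⟨26, fun Φ hqf => ?_⟩
  -- fresh atoms
  have hinf : (Φ.atomsᶜ : Set AP).Infinite := (atoms_finite Φ).infinite_compl
  let e := hinf.natEmbedding
  let f : ℕ → AP := fun n => (e n : AP)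
  have hfinj : Function.Injective f := fun a b h => e.injective (Subtype.ext h)
  have hfA : ∀ n, f n ∉ Φ.atoms := fun n => (e n).2
  set L := (trf f Φ 0).2 with hLdef
  set m := L.length with hmdef
  set Φ0 := (trf f Φ 0).1 with hΦ0def
  refine ⟨m, fun i => f i, Φ0, fun i => (L[(i : ℕ)]'i.isLt).1, ?_, ?_, ?_, ?_, ?_, ?_⟩
  · intro a b h
    exact Fin.ext (hfinj h)
  · intro i
    exact hfA i
  · exact boolAtoms_boolCombBasic (trf_fst_bool f Φ 0)
  · intro i
    exact trf_snd_basic f Φ 0 _ (List.getElem_mem _)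
  · -- equivalence
    intro W _ K x
    rw [sat_exiMany]
    have hmemk : ∀ q : AP, q ∈ {a : AP | a ∈ (List.finRange m).map (fun i : Fin m => f i)}
        ↔ ∃ j < m, f j = q := by
      intro q
      simp only [Set.mem_setOf_eq, List.mem_map, List.mem_finRange, true_and]
      constructor
      · rintro ⟨i, rfl⟩; exact ⟨i, i.isLt, rfl⟩
      · rintro ⟨j, hj, rfl⟩; exact ⟨⟨j, hj⟩, rfl⟩
    constructor
    · -- forward
      intro hsat
      refine ⟨⟨K.E, K.serial, fun v =>
        {q | (q ∈ K.label v ∧ ∀ j < m, q ≠ f j) ∨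
          ∃ j, ∃ hj : j < m, q = f j ∧ (L[j]'hj).2.sat K v}⟩, ?_, ?_⟩
      · refine ⟨rfl, fun v q hq => ?_⟩
        rw [hmemk] at hq
        push_neg at hq
        simp only [Set.mem_setOf_eq]
        constructor
        · rintro ((⟨h1, -⟩) | ⟨j, hj, rfl, -⟩)
          · exact h1
          · exact absurd rfl (hq j hj)
        · intro h
          exact Or.inl ⟨h, fun j hj hqe => hq j hj hqe.symm⟩
      · set K' : Kripke AP W := ⟨K.E, K.serial, fun v =>
          {q | (q ∈ K.label v ∧ ∀ j < m, q ≠ f j) ∨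
            ∃ j, ∃ hj : j < m, q = f j ∧ (L[j]'hj).2.sat K v}⟩ with hK'
        have hwin : Hwin f K K' Set.univ 0 L m := by
          intro y _ j hj hjm
          show _ ∈ {q | _} ↔ _
          simp only [Set.mem_setOf_eq, Nat.zero_add]
          constructor
          · rintro (⟨-, h2⟩ | ⟨j', hj', hqe, hs⟩)
            · exact absurd rfl (h2 j hjm)
            · obtain rfl : j' = j := (hfinj hqe.symm)
              exact hs
          · intro hs
            exact Or.inr ⟨j, hjm, rfl, hs⟩
        have hagree : ∀ y q, q ∈ Φ.atoms → (q ∈ K'.label y ↔ q ∈ K.label y) := by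
          intro y q hq
          show q ∈ {q | _} ↔ _
          change (q ∈ K.label y ∧ ∀ j < m, q ≠ f j) ∨ (∃ j, ∃ hj : j < m, q = f j ∧ (L[j]'hj).2.sat K y) ↔ _
          constructor
          · rintro (⟨h1, -⟩ | ⟨j, hj, rfl, -⟩)
            · exact h1
            · exact absurd hq (hfA j)
          · intro h
            exact Or.inl ⟨h, fun j hj hqe => hfA j (hqe ▸ hq)⟩
        obtain ⟨C1, C2⟩ := main_tr f K K' rfl Set.univ (fun _ _ _ _ => trivial) Φ hqf hagree 0
        unfold flatBody
        rw [sat_conjList]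
        refine ⟨fun ψ hψ => ?_, (C1 hwin x trivial).2 hsat⟩
        simp only [List.mem_map, List.mem_finRange, true_and] at hψ
        obtain ⟨i, rfl⟩ := hψ
        rw [sat_qAG]
        intro y _
        rw [sat_qiff]
        have h1 : f (i : ℕ) ∈ K'.label y ↔ (L[(i : ℕ)]'i.isLt).2.sat K y := by
          have := hwin y trivial (i : ℕ) i.isLt i.isLt
          simpa using this
        have h2 := C2 (i : ℕ) i.isLt (Hwin_mono hwin (Nat.le_of_lt i.isLt)) y trivial
        show f (i : ℕ) ∈ K'.label y ↔ _
        rw [h1, h2]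
    · -- backward
      rintro ⟨K', ⟨hE', hl'⟩, hbody⟩
      unfold flatBody at hbody
      rw [sat_conjList] at hbody
      obtain ⟨hconj, hΦ0⟩ := hbody
      set S : Set W := {y | Relation.ReflTransGen K.E x y} with hSdef
      have hSclosed : ∀ ⦃y z : W⦄, y ∈ S → K.E y z → z ∈ S := fun y z hy hyz => hy.tail hyz
      have hxS : x ∈ S := Relation.ReflTransGen.refl
      have hagree : ∀ y q, q ∈ Φ.atoms → (q ∈ K'.label y ↔ q ∈ K.label y) := by
        intro y q hq
        refine hl' y q ?_
        rw [hmemk]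
        rintro ⟨j, hj, rfl⟩
        exact hfA j hq
      obtain ⟨C1, C2⟩ := main_tr f K K' hE' S hSclosed Φ hqf hagree 0
      have hAG : ∀ i : Fin m, ∀ y ∈ S,
          (f (i : ℕ) ∈ K'.label y ↔ ((L[(i : ℕ)]'i.isLt).1).sat K' y) := by
        intro i y hy
        have hmem : QCTL.qAG (QCTL.qiff (QCTL.atom (f (i : ℕ))) (L[(i : ℕ)]'i.isLt).1)
            ∈ (List.finRange m).map (fun i : Fin m =>
              QCTL.qAG (QCTL.qiff (QCTL.atom (f (i : ℕ))) (L[(i : ℕ)]'i.isLt).1)) :=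
          List.mem_map.2 ⟨i, List.mem_finRange i, rfl⟩
        have := hconj _ hmem
        rw [sat_qAG] at this
        have hy' : Relation.ReflTransGen K'.E x y := by rw [hE']; exact hy
        have := this y hy'
        rwa [sat_qiff] at this
      have hwin : ∀ k, k ≤ m → Hwin f K K' S 0 L k := by
        intro k
        induction k with
        | zero => intro _ y _ j _ hj; omega
        | succ k ih =>
          intro hk y hy j hj hjk
          rcases Nat.lt_or_ge j k with hcase | hcase
          · exact ih (by omega) y hy j hj hcase
          · obtain rfl : j = k := by omega
            simp only [Nat.zero_add]
            have h1 := hAG ⟨j, hj⟩ y hy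
            have h2 := C2 j hj (ih (by omega)) y hy
            simp only at h1
            rw [h1, h2]
      have := C1 (hwin m (le_refl m)) x hxS
      exact this.1 hΦ0
  · -- size
    have hb1 : m ≤ Φ.qsize := by rw [hmdef, hLdef]; exact trf_len_le f Φ 0
    have hb2 : (L.map (fun e => e.1.qsize)).sum + Φ0.qsize ≤ 2 * Φ.qsize := by
      rw [hLdef, hΦ0def]; exact trf_size f Φ 0
    have hlen1 : ((List.finRange m).map (fun i : Fin m => f i)).length = m := by simp
    rw [qsize_exiMany, hlen1]
    unfold flatBody
    rw [qsize_conjList]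
    have hlen2 : ((List.finRange m).map (fun i : Fin m =>
        QCTL.qAG (QCTL.qiff (QCTL.atom (f (i : ℕ))) (L[(i : ℕ)]'i.isLt).1))).length = m := by simp
    rw [hlen2]
    have hsum : (((List.finRange m).map (fun i : Fin m =>
        QCTL.qAG (QCTL.qiff (QCTL.atom (f (i : ℕ))) (L[(i : ℕ)]'i.isLt).1))).map QCTL.qsize).sum
        = 2 * ((L.map (fun e => e.1.qsize)).sum) + 17 * m := by
      rw [List.map_map]
      have heq : (QCTL.qsize ∘ fun i : Fin m =>
          QCTL.qAG (QCTL.qiff (QCTL.atom (f (i : ℕ))) (L[(i : ℕ)]'i.isLt).1))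
          = fun i : Fin m => 2 * (fun e : QCTL AP × QCTL AP => e.1.qsize) (L[(i : ℕ)]'i.isLt) + 17 := by
        funext i
        exact qsize_conj_piece _ _
      rw [heq]
      have h1 : ((List.finRange m).map (fun i : Fin m =>
          2 * (fun e : QCTL AP × QCTL AP => e.1.qsize) (L[(i : ℕ)]'i.isLt) + 17)).sum
          = (L.map (fun e => 2 * e.1.qsize + 17)).sum := by
        exact sum_finRange_getElem L (fun e => 2 * e.1.qsize + 17)
      rw [h1, sum_affine L (fun e => e.1.qsize) 17, hmdef]
    rw [hsum]
    omega

end Assembly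
/-- Flattening of CTL: any CTL formula `Φ` is equivalent to a QCTL formula
`Ψ = ∃κ₁…κₘ.( Φ₀ ∧ ⋀ᵢ AG(κᵢ ↔ θᵢ) )` where the `κᵢ` are fresh, `Φ₀` is a Boolean
combination of basic CTL formulas, every `θᵢ` is a basic CTL formula, and `|Ψ| ∈ O(|Φ|)`. -/
theorem flatten_ctl {AP : Type} [Inhabited AP] [Infinite AP] :
    ∃ C : ℕ, ∀ Φ : QCTL AP, Φ.quantFree →
      ∃ (m : ℕ) (κ : Fin m → AP) (Φ0 : QCTL AP) (θ : Fin m → QCTL AP),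
        Function.Injective κ ∧ (∀ i, κ i ∉ Φ.atoms) ∧
        BoolCombBasic Φ0 ∧ (∀ i, BasicCTL (θ i)) ∧
        QEquiv Φ (exiMany ((List.finRange m).map κ) (flatBody m κ Φ0 θ)) ∧
        (exiMany ((List.finRange m).map κ) (flatBody m κ Φ0 θ)).qsize ≤ C * Φ.qsize := by
  exact flatten_ctl'
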